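/- arXiv:1910.07319 — 5 statements merged into one kernel-verified Lean document; each statement's English description precedes it below -/
import Mathlib

section
/- Let π : A → O be a complete Noetherian local ring surjecting onto a discrete valuation ring with Φ_A := ker(π)/ker(π)² of finite length, and set η_A := π(Ann_A(ker π)). Then O/η_A has finite length and length(Φ_A) ≥ length(O/η_A). -/
universe u

open IsLocalRing

/-- The length of a module, expressed as the Krull dimension of its lattice of
submodules (this agrees with the usual Jordan–Hölder length). -/
noncomputable def moduleLength (R M : Type*) [Ring R] [AddCommGroup M] [Module R M] :
    WithBot ℕ∞ :=
  Order.krullDim (Submodule R M)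

/-- A (Noetherian) local ring is regular if its maximal ideal is generated by
`dim R` elements. -/
def IsRegularLocalRing' (R : Type*) [CommRing R] : Prop :=
  IsNoetherianRing R ∧ ∃ (h : IsLocalRing R) (s : Finset R),
    Ideal.span (s : Set R) = @IsLocalRing.maximalIdeal R _ h ∧
    (s.card : WithBot ℕ∞) = ringKrullDim R

/-- A local ring is a complete intersection if it is the quotient of a regular
local ring by an ideal generated by a regular sequence. -/
def IsCompleteIntersectionLocalRing (A : Type u) [CommRing A] : Prop :=
  IsLocalRing A ∧ IsNoetherianRing A ∧
  ∃ (R : CommRingCat.{u}) (f : R →+* A) (rs : List R),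
    IsRegularLocalRing' R ∧ Function.Surjective f ∧
    RingTheory.Sequence.IsRegular (R : Type u) rs ∧
    RingHom.ker f = Ideal.span {x | x ∈ rs}

section Helpers


/-- Transfer submodule lattices along a surjective ring hom with compatible actions. -/
def submoduleOrderIsoOfSurjective {R S M : Type*} [CommRing R] [CommRing S] [AddCommGroup M]
    [Module R M] [Module S M] (π : R →+* S) (hπ : Function.Surjective π)
    (hsmul : ∀ (a : R) (m : M), π a • m = a • m) : Submodule S M ≃o Submodule R M where
  toFun S :=
    { carrier := S
      add_mem' := fun h1 h2 => S.add_mem h1 h2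
      zero_mem' := S.zero_mem
      smul_mem' := fun a m h => by rw [← hsmul]; exact S.smul_mem _ h }
  invFun T :=
    { carrier := T
      add_mem' := fun h1 h2 => T.add_mem h1 h2
      zero_mem' := T.zero_mem
      smul_mem' := fun s m h => by obtain ⟨a, rfl⟩ := hπ s; rw [hsmul]; exact T.smul_mem _ h }
  left_inv S := by ext x; rfl
  right_inv T := by ext x; rfl
  map_rel_iff' := Iff.rfl

theorem submoduleOrderIsoOfSurjective_coe {R S M : Type*} [CommRing R] [CommRing S] [AddCommGroup M]
    [Module R M] [Module S M] (π : R →+* S) (hπ : Function.Surjective π)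
    (hsmul : ∀ (a : R) (m : M), π a • m = a • m) (S' : Submodule S M) (x : M) :
    x ∈ submoduleOrderIsoOfSurjective π hπ hsmul S' ↔ x ∈ S' := Iff.rfl

open Order in
theorem quotient_bound {O : Type*} [CommRing O] [IsDomain O] [IsDiscreteValuationRing O]
    {ϖ : O} (hϖ : Irreducible ϖ) (η : Ideal O) (md : ℕ) (hmem : ϖ ^ md ∈ η) :
    IsFiniteLength O (O ⧸ η) ∧ Order.krullDim (Submodule O (O ⧸ η)) ≤ (md : WithBot ℕ∞) := by
  classical
  have hπne : (ϖ : O) ≠ 0 := hϖ.ne_zero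
  have hex : ∀ S : Submodule O (O ⧸ η), ∃ k, η.mkQ (ϖ ^ k) ∈ S := by
    intro S
    refine ⟨md, ?_⟩
    have : η.mkQ (ϖ ^ md) = 0 := (Submodule.Quotient.mk_eq_zero η).mpr hmem
    rw [this]; exact S.zero_mem
  let F : Submodule O (O ⧸ η) → ℕ := fun S => Nat.find (hex S)
  have hFle : ∀ S, F S ≤ md := fun S => Nat.find_le (by
    have : η.mkQ (ϖ ^ md) = 0 := (Submodule.Quotient.mk_eq_zero η).mpr hmem
    rw [this]; exact S.zero_mem)
  have hFdet : ∀ S, S = Submodule.map η.mkQ (Ideal.span {ϖ ^ F S}) := by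
    intro S
    have hS : Submodule.map η.mkQ (Submodule.comap η.mkQ S) = S := by
      rw [Submodule.map_comap_eq, Submodule.range_mkQ, top_inf_eq]
    set J := Submodule.comap η.mkQ S with hJ
    have hJne : J ≠ ⊥ := by
      intro h
      have h1 : ϖ ^ md ∈ J := by
        refine Submodule.mem_comap.mpr ?_
        have : η.mkQ (ϖ ^ md) = 0 := (Submodule.Quotient.mk_eq_zero η).mpr hmem
        rw [this]; exact S.zero_mem
      rw [h] at h1
      exact pow_ne_zero md hπne ((Submodule.mem_bot O).mp h1)
    obtain ⟨k, hk⟩ := IsDiscreteValuationRing.ideal_eq_span_pow_irreducible hJne hϖ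
    have h1 : F S ≤ k := by
      refine Nat.find_le ?_
      have hmemJ : ϖ ^ k ∈ J := by rw [hk]; exact Ideal.subset_span rfl
      exact hS ▸ Submodule.mem_map_of_mem hmemJ
    have h2 : k ≤ F S := by
      have hmemJ : ϖ ^ F S ∈ J := Nat.find_spec (hex S)
      rw [hk] at hmemJ
      obtain ⟨c, hc⟩ := Ideal.mem_span_singleton.mp hmemJ
      exact (pow_dvd_pow_iff hπne hϖ.not_isUnit).mp ⟨c, hc⟩
    rw [h1.antisymm h2, ← hk]
    exact hS.symm
  have hstrict : ∀ S T : Submodule O (O ⧸ η), S < T → F T < F S := by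
    intro S T hST
    have hle : F T ≤ F S := Nat.find_le (hST.le (Nat.find_spec (hex S)))
    rcases hle.lt_or_eq with h | h
    · exact h
    · exfalso
      exact hST.ne (by rw [hFdet S, hFdet T, h])
  let G : Submodule O (O ⧸ η) → Fin (md + 1) := fun S => ⟨md - F S, by omega⟩
  have hG : StrictMono G := by
    intro S T h
    have h1 := hstrict S T h
    have h2 := hFle S
    simp only [G, Fin.mk_lt_mk]
    omega
  constructor
  · rw [isFiniteLength_iff_isNoetherian_isArtinian]
    haveI hwf : WellFoundedLT (Fin (md + 1)) := inferInstance
    exact ⟨inferInstance, @StrictMono.wellFoundedLT _ _ _ _ G hwf hG⟩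
  · rw [Order.krullDim_eq_iSup_length]
    have key : (⨆ p : LTSeries (Submodule O (O ⧸ η)), (p.length : ℕ∞)) ≤ (md : ℕ∞) := by
      refine iSup_le fun p => ?_
      have : p.length + 1 ≤ md + 1 := by
        simpa using Fintype.card_le_of_injective (G ∘ p) ((hG.comp p.strictMono).injective)
      exact Nat.cast_le.mpr (by omega)
    exact_mod_cast WithBot.coe_le_coe.mpr key

theorem snf_f_surjective {O M ι : Type*} [CommRing O] [IsDomain O] [IsDiscreteValuationRing O]
    [AddCommGroup M] [Module O M] {K : Submodule O M} [IsArtinian O (M ⧸ K)] [Fintype ι]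
    {m : ℕ} (snf : Module.Basis.SmithNormalForm K ι m) : Function.Surjective snf.f := by
  intro j
  by_contra hj
  have hj' : j ∉ Set.range snf.f := by simpa using hj
  obtain ⟨ϖ, hϖ⟩ := IsDiscreteValuationRing.exists_irreducible O
  set z : M ⧸ K := K.mkQ (snf.bM j) with hz
  have htf : ∀ r : O, r • z = 0 → r = 0 := by
    intro r hr
    have hmem : r • snf.bM j ∈ K := by
      rwa [← Submodule.Quotient.mk_eq_zero, Submodule.Quotient.mk_smul]
    have := snf.le_ker_coord_of_notMem_range hj' hmem
    simpa using this
  have hmono : ∀ k : ℕ, (Submodule.span O {ϖ ^ (k+1) • z} : Submodule O (M ⧸ K)) ≤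
      Submodule.span O {ϖ ^ k • z} := by
    intro k
    rw [Submodule.span_le, Set.singleton_subset_iff]
    have : ϖ ^ (k+1) • z = ϖ • (ϖ ^ k • z) := by rw [← mul_smul, pow_succ, mul_comm]
    rw [this]
    exact Submodule.smul_mem _ _ (Submodule.mem_span_singleton_self _)
  have hanti : Antitone (fun k : ℕ => (Submodule.span O {ϖ ^ k • z} : Submodule O (M ⧸ K))) :=
    antitone_nat_of_succ_le hmono
  let f : ℕ →o (Submodule O (M ⧸ K))ᵒᵈ :=
    ⟨fun k => OrderDual.toDual (Submodule.span O {ϖ ^ k • z}),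
      fun a b hab => OrderDual.toDual_le_toDual.mpr (hanti hab)⟩
  obtain ⟨N, hN⟩ := IsArtinian.monotone_stabilizes f
  have heq : Submodule.span O {ϖ ^ (N+1) • z} = Submodule.span O {ϖ ^ N • z} :=
    congrArg OrderDual.ofDual (hN (N+1) (by omega)).symm
  have : ϖ ^ N • z ∈ Submodule.span O {ϖ ^ (N+1) • z} := by
    rw [heq]; exact Submodule.mem_span_singleton_self _
  obtain ⟨c, hc⟩ := Submodule.mem_span_singleton.mp this
  have h0 : (ϖ ^ N * (1 - c * ϖ)) • z = 0 := by
    have hc' : (c * ϖ ^ (N+1)) • z = ϖ ^ N • z := by rw [mul_smul]; exact hc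
    rw [mul_sub, mul_one, sub_smul, show ϖ ^ N * (c * ϖ) = c * ϖ ^ (N+1) by ring, hc', sub_self]
  have := htf _ h0
  have h1 : (1 : O) - c * ϖ = 0 := by
    rcases mul_eq_zero.mp this with h | h
    · exact absurd h (pow_ne_zero _ hϖ.ne_zero)
    · exact h
  exact hϖ.not_isUnit (IsUnit.of_mul_eq_one (a := ϖ) c (by linear_combination -h1))

open Order in
theorem height_bound {O M ι : Type*} [CommRing O] [IsDomain O] [AddCommGroup M] [Module O M]
    [Fintype ι] {K : Submodule O M} {m : ℕ} (snf : Module.Basis.SmithNormalForm K ι m)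
    {ϖ : O} (hϖ : Irreducible ϖ) (mv : Fin m → ℕ)
    (ha : ∀ i, Associated (snf.a i) (ϖ ^ mv i)) :
    ((∑ i, mv i : ℕ) : WithBot ℕ∞) ≤ Order.krullDim (Submodule O (M ⧸ K)) := by
  classical
  set v : Fin m → M := fun i => snf.bM (snf.f i) with hv
  set U : ℕ → Set M := fun j => v '' {i : Fin m | (i : ℕ) < j} with hU
  set W : ℕ → Submodule O M := fun j => K ⊔ Submodule.span O (U j) with hW
  set V : Fin m → ℕ → Submodule O M := fun i t => W i ⊔ Submodule.span O {ϖ ^ t • v i} with hV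
  have hK : K = Submodule.span O (Set.range (fun i' => ((snf.bN i' : M)))) := by
    conv_lhs => rw [← Submodule.map_subtype_top K]
    rw [← snf.bN.span_eq, Submodule.map_span]
    congr 1
    rw [← Set.range_comp]
    rfl
  -- coordinate computations
  have hcoord : ∀ (i i' : Fin m), snf.bM.coord (snf.f i) (v i') = if i' = i then 1 else 0 := by
    intro i i'
    rw [hv]
    simp only [Module.Basis.coord_apply, Module.Basis.repr_self]
    rw [Finsupp.single_apply]
    congr 1
    simp only [eq_iff_iff]
    exact ⟨fun h => snf.f.injective h, fun h => by rw [h]⟩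
  -- K ≤ W i ≤ V i t
  have hKW : ∀ j, K ≤ W j := fun j => le_sup_left
  have hKV : ∀ i t, K ≤ V i t := fun i t => (hKW i).trans le_sup_left
  -- F1 : V i (mv i) = W i
  have hKa : ∀ i : Fin m, ϖ ^ mv i • v i ∈ K := by
    intro i
    obtain ⟨u, hu⟩ := ha i
    have : ϖ ^ mv i • v i = (u : O) • ((snf.bN i : M)) := by
      rw [snf.snf i, ← hu, ← mul_smul, mul_comm]
    rw [this]
    exact K.smul_mem _ (snf.bN i).2
  have hF1 : ∀ i : Fin m, V i (mv i) = W i := by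
    intro i
    rw [hV]
    simp only
    rw [sup_eq_left.mpr]
    rw [Submodule.span_le, Set.singleton_subset_iff]
    exact (hKW i) (hKa i)
  -- F2 : V i 0 = W (i+1)
  have hF2 : ∀ (j : ℕ) (hj : j < m), V ⟨j, hj⟩ 0 = W (j + 1) := by
    intro j hj
    have hidx : {i : Fin m | (i : ℕ) < j + 1} = {i : Fin m | (i : ℕ) < j} ∪ {(⟨j, hj⟩ : Fin m)} := by
      ext i
      simp only [Set.mem_setOf_eq, Set.mem_union, Set.mem_singleton_iff, Fin.ext_iff]
      omega
    have hUeq : U (j + 1) = U j ∪ {v ⟨j, hj⟩} := by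
      rw [hU]
      simp only
      rw [hidx, Set.image_union, Set.image_singleton]
    show (K ⊔ Submodule.span O (U j)) ⊔ Submodule.span O {ϖ ^ 0 • v ⟨j, hj⟩} =
      K ⊔ Submodule.span O (U (j + 1))
    rw [pow_zero, one_smul, hUeq, Submodule.span_union, sup_assoc]
  -- F3 : strictness
  have hstrict : ∀ (i : Fin m) (t : ℕ), t < mv i → V i (t + 1) < V i t := by
    intro i t ht
    have hle : V i (t + 1) ≤ V i t := by
      refine sup_le_sup_left ?_ _
      rw [Submodule.span_le, Set.singleton_subset_iff]
      have : ϖ ^ (t + 1) • v i = ϖ • (ϖ ^ t • v i) := by rw [← mul_smul, pow_succ, mul_comm]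
      rw [this]
      exact Submodule.smul_mem _ _ (Submodule.mem_span_singleton_self _)
    refine lt_of_le_of_ne hle ?_
    intro heq
    set ℓ : M →ₗ[O] O := snf.bM.coord (snf.f i) with hℓ
    have hmapV : Submodule.map ℓ (V i (t + 1)) ≤ Ideal.span {ϖ ^ (t + 1)} := by
      rw [hV]
      simp only
      rw [Submodule.map_sup, Submodule.map_sup]
      refine sup_le (sup_le ?_ ?_) ?_
      · rw [hK, Submodule.map_span, Submodule.span_le]
        rintro - ⟨-, ⟨i', rfl⟩, rfl⟩
        have : ℓ ((snf.bN i' : M)) = snf.a i' * (if i' = i then 1 else 0) := by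
          rw [snf.snf i', map_smul, smul_eq_mul]
          congr 1
          exact hcoord i i'
        rw [SetLike.mem_coe, this]
        by_cases hii : i' = i
        · subst hii
          rw [if_pos rfl, mul_one]
          obtain ⟨u, hu⟩ := ha i'
          refine Ideal.mem_span_singleton.mpr ⟨ϖ ^ (mv i' - (t + 1)) * (u⁻¹ : Oˣ), ?_⟩
          have hpow : ϖ ^ mv i' = ϖ ^ (t + 1) * ϖ ^ (mv i' - (t + 1)) := by
            rw [← pow_add]
            congr 1
            omega
          calc snf.a i' = snf.a i' * u * (u⁻¹ : Oˣ) := by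
                rw [mul_assoc]
                simp
            _ = ϖ ^ (t + 1) * (ϖ ^ (mv i' - (t + 1)) * (u⁻¹ : Oˣ)) := by
                rw [hu, hpow, mul_assoc]
        · simp [hii]
      · rw [Submodule.map_span, Submodule.span_le]
        rintro - ⟨-, ⟨i', hi', rfl⟩, rfl⟩
        have hii : i' ≠ i := by
          intro h
          subst h
          simp only [Set.mem_setOf_eq] at hi'
          omega
        have : ℓ (v i') = 0 := by rw [hcoord i i', if_neg hii]
        rw [SetLike.mem_coe, this]
        exact Ideal.zero_mem _
      · rw [Submodule.map_span, Submodule.span_le]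
        rintro - ⟨-, rfl, rfl⟩
        have : ℓ (ϖ ^ (t + 1) • v i) = ϖ ^ (t + 1) := by
          rw [map_smul, smul_eq_mul, hcoord i i, if_pos rfl, mul_one]
        rw [SetLike.mem_coe, this]
        exact Ideal.subset_span rfl
    have hmemx : ϖ ^ t • v i ∈ V i (t + 1) := by
      rw [heq]
      exact Submodule.mem_sup_right (Submodule.mem_span_singleton_self _)
    have : ℓ (ϖ ^ t • v i) ∈ Ideal.span {ϖ ^ (t + 1)} :=
      hmapV (Submodule.mem_map_of_mem hmemx)
    rw [map_smul, smul_eq_mul, hcoord i i, if_pos rfl, mul_one] at this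
    obtain ⟨c, hc⟩ := Ideal.mem_span_singleton.mp this
    have := (pow_dvd_pow_iff hϖ.ne_zero hϖ.not_isUnit).mp ⟨c, hc⟩
    omega
  -- strict monotonicity of map mkQ on submodules containing K
  have hmkQ : ∀ p q : Submodule O M, K ≤ p → p < q →
      Submodule.map K.mkQ p < Submodule.map K.mkQ q := by
    intro p q hKp hpq
    refine lt_of_le_of_ne (Submodule.map_mono hpq.le) ?_
    intro h
    have h2 := congrArg (Submodule.comap K.mkQ) h
    rw [Submodule.comap_map_mkQ, Submodule.comap_map_mkQ, sup_eq_right.mpr hKp,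
      sup_eq_right.mpr (hKp.trans hpq.le)] at h2
    exact hpq.ne h2
  -- height step
  have hstep : ∀ x y : Submodule O (M ⧸ K), x < y →
      Order.height x + 1 ≤ Order.height y := by
    intro x y h
    rw [Order.height_eq_iSup_lt_height y]
    exact le_iSup₂_of_le x h le_rfl
  -- inner induction
  have inner : ∀ (i : Fin m) (c : ℕ∞), c ≤ Order.height (Submodule.map K.mkQ (W i)) →
      ∀ t, t ≤ mv i → c + (t : ℕ∞) ≤ Order.height (Submodule.map K.mkQ (V i (mv i - t))) := by
    intro i c hc t
    induction t with
    | zero =>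
      intro _
      simpa [hF1 i] using hc
    | succ t iht =>
      intro ht1
      have hts : mv i - (t + 1) + 1 = mv i - t := by omega
      have hlt : V i (mv i - (t + 1)) > V i (mv i - (t + 1) + 1) :=
        hstrict i (mv i - (t + 1)) (by omega)
      have h2 : Submodule.map K.mkQ (V i (mv i - t)) < Submodule.map K.mkQ (V i (mv i - (t + 1))) := by
        refine hmkQ _ _ (hKV _ _) ?_
        rw [← hts]
        exact hlt
      calc c + ((t + 1 : ℕ) : ℕ∞) = (c + (t : ℕ∞)) + 1 := by
            push_cast
            rw [add_assoc]
        _ ≤ Order.height (Submodule.map K.mkQ (V i (mv i - t))) + 1 := by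
            exact add_le_add_left (iht (by omega)) 1
        _ ≤ Order.height (Submodule.map K.mkQ (V i (mv i - (t + 1)))) := hstep _ _ h2
  -- partial sums
  set ps : ℕ → ℕ := fun j => ∑ i ∈ Finset.univ.filter (fun i : Fin m => (i : ℕ) < j), mv i with hps
  have hps0 : ps 0 = 0 := by
    rw [hps]
    simp
  have hpssucc : ∀ (j : ℕ) (hj : j < m), ps (j + 1) = ps j + mv ⟨j, hj⟩ := by
    intro j hj
    rw [hps]
    simp only
    have : Finset.univ.filter (fun i : Fin m => (i : ℕ) < j + 1) =
        insert (⟨j, hj⟩ : Fin m) (Finset.univ.filter (fun i : Fin m => (i : ℕ) < j)) := by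
      ext i
      simp only [Finset.mem_filter, Finset.mem_univ, true_and, Finset.mem_insert, Fin.ext_iff]
      omega
    rw [this, Finset.sum_insert (by simp)]
    ring
  -- outer induction
  have outer : ∀ j, j ≤ m → ((ps j : ℕ∞)) ≤ Order.height (Submodule.map K.mkQ (W j)) := by
    intro j
    induction j with
    | zero =>
      intro _
      rw [hps0]
      simp
    | succ j ihj =>
      intro hj1
      have hj : j < m := by omega
      have h1 := inner ⟨j, hj⟩ (ps j) (ihj (by omega)) (mv ⟨j, hj⟩) le_rfl
      rw [Nat.sub_self, hF2 j hj] at h1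
      calc ((ps (j + 1) : ℕ∞)) = (ps j : ℕ∞) + (mv ⟨j, hj⟩ : ℕ∞) := by
            rw [hpssucc j hj]
            push_cast
            rfl
        _ ≤ _ := h1
  -- conclude
  have hfinal := outer m le_rfl
  have hsum : ps m = ∑ i, mv i := by
    rw [hps]
    congr 1
    simp only
    rw [Finset.filter_true_of_mem]
    intro i _
    exact i.2
  rw [hsum] at hfinal
  calc ((∑ i, mv i : ℕ) : WithBot ℕ∞) ≤ ((Order.height (Submodule.map K.mkQ (W m)) : ℕ∞) : WithBot ℕ∞) := by
        exact_mod_cast WithBot.coe_le_coe.mpr hfinal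
    _ ≤ Order.krullDim (Submodule O (M ⧸ K)) := Order.height_le_krullDim _

end Helpers

/-- For an augmented complete Noetherian local ring `π : A → O`
with `Φ_A = ker π/(ker π)²` of finite length, the quotient `O/η_A` (where
`η_A = π(Ann_A(ker π))`) has finite length and `length Φ_A ≥ length (O/η_A)`. -/
theorem length_cotangent_ge_length_congruence_module
    (A : Type u) [CommRing A] [IsNoetherianRing A] [IsLocalRing A]
    [IsAdicComplete (maximalIdeal A) A]
    (O : Type u) [CommRing O] [IsDomain O] [IsDiscreteValuationRing O]
    (π : A →+* O) (hπ : Function.Surjective π)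
    (hfin : IsFiniteLength A (RingHom.ker π).Cotangent) :
    IsFiniteLength O (O ⧸ ((RingHom.ker π).annihilator.map π)) ∧
    moduleLength O (O ⧸ ((RingHom.ker π).annihilator.map π)) ≤
      moduleLength A (RingHom.ker π).Cotangent := by
  classical
  set I := RingHom.ker π with hI
  set η : Ideal O := I.annihilator.map π with hη
  -- O-module structure on the cotangent module
  let ε : (A ⧸ I) ≃+* O := RingHom.quotientKerEquivOfSurjective hπ
  letI : Module O I.Cotangent := Module.compHom _ (ε.symm : O →+* A ⧸ I)
  have hε : ∀ a : A, ε.symm (π a) = Ideal.Quotient.mk I a := by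
    intro a
    have h1 : ε ((Ideal.Quotient.mk I) a) = π a := RingHom.kerLift_mk π a
    rw [← h1, RingEquiv.symm_apply_apply]
  have hsmul : ∀ (a : A) (φ : I.Cotangent), π a • φ = a • φ := by
    intro a φ
    show ε.symm (π a) • φ = a • φ
    rw [hε]
    rfl
  let Λ : Submodule O I.Cotangent ≃o Submodule A I.Cotangent :=
    submoduleOrderIsoOfSurjective π hπ hsmul
  haveI hart : IsArtinian A I.Cotangent := (isFiniteLength_iff_isNoetherian_isArtinian.mp hfin).2
  haveI hartO : IsArtinian O I.Cotangent := Λ.strictMono.wellFoundedLT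
  -- generators of I
  obtain ⟨s, hs⟩ := (IsNoetherian.noetherian I : I.FG)
  set n := s.card with hn
  set x : Fin n → A := fun i => (s.equivFin.symm i : A) with hx
  have hxr : Set.range x = (s : Set A) := by
    ext y
    constructor
    · rintro ⟨i, rfl⟩
      exact (s.equivFin.symm i).2
    · intro hy
      exact ⟨s.equivFin ⟨y, hy⟩, by simp [hx]⟩
  have hxspan : Ideal.span (Set.range x) = I := by rw [Ideal.span, hxr]; exact hs
  have hxI : ∀ i, x i ∈ I := fun i => hxspan ▸ Ideal.subset_span ⟨i, rfl⟩
  set xI : Fin n → I := fun i => ⟨x i, hxI i⟩ with hxIdef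
  set xb : Fin n → I.Cotangent := fun i => I.toCotangent (xI i) with hxb
  -- the cotangent classes generate over O
  have hspanI : Submodule.span A (Set.range xI) = ⊤ := by
    apply Submodule.map_injective_of_injective (Submodule.injective_subtype I)
    rw [Submodule.map_span, Submodule.map_subtype_top, ← Set.range_comp]
    exact hxspan
  have hspanA : Submodule.span A (Set.range xb) = ⊤ := by
    have : Set.range xb = I.toCotangent '' Set.range xI := by
      rw [hxb, ← Set.range_comp]
      rfl
    rw [this, ← Submodule.map_span, hspanI, Submodule.map_top, Ideal.toCotangent_range]
  have hspanO : Submodule.span O (Set.range xb) = ⊤ := by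
    have hle : Submodule.span A (Set.range xb) ≤ Λ (Submodule.span O (Set.range xb)) :=
      Submodule.span_le.mpr fun y hy => Submodule.subset_span hy
    rw [hspanA, top_le_iff] at hle
    exact Λ.injective (by rw [hle, map_top])
  -- presentation of the cotangent module
  set g : (Fin n → O) →ₗ[O] I.Cotangent := Fintype.linearCombination O xb with hg
  have hgsurj : Function.Surjective g := by
    rw [← LinearMap.range_eq_top, hg, Fintype.range_linearCombination]
    exact hspanO
  set K : Submodule O (Fin n → O) := LinearMap.ker g with hK
  let e2 : ((Fin n → O) ⧸ K) ≃ₗ[O] I.Cotangent := g.quotKerEquivOfSurjective hgsurj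
  let Λ2 : Submodule O ((Fin n → O) ⧸ K) ≃o Submodule O I.Cotangent :=
    Submodule.orderIsoMapComap e2
  haveI hartK : IsArtinian O ((Fin n → O) ⧸ K) := Λ2.strictMono.wellFoundedLT
  -- Smith normal form
  obtain ⟨m, snf⟩ := K.smithNormalForm (Pi.basisFun O (Fin n))
  have hfsurj : Function.Surjective snf.f := snf_f_surjective snf
  let fe : Fin m ≃ Fin n := Equiv.ofBijective snf.f ⟨snf.f.injective, hfsurj⟩
  obtain ⟨ϖ, hϖ⟩ := IsDiscreteValuationRing.exists_irreducible O
  have ha0 : ∀ i, snf.a i ≠ 0 := by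
    intro i h
    have h1 : ((snf.bN i : Fin n → O)) = 0 := by
      rw [snf.snf i, h, zero_smul]
    have h2 : snf.bN i = 0 := Subtype.coe_injective h1
    exact snf.bN.ne_zero i h2
  have hassoc : ∀ i, ∃ k : ℕ, Associated (snf.a i) (ϖ ^ k) := fun i =>
    IsDiscreteValuationRing.associated_pow_irreducible (ha0 i) hϖ
  choose mv ha using hassoc
  -- lower bound : ∑ mv ≤ length of cotangent module
  have hlow : ((∑ i, mv i : ℕ) : WithBot ℕ∞) ≤ moduleLength A I.Cotangent := by
    refine le_trans (height_bound snf hϖ mv ha) ?_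
    rw [moduleLength, Order.krullDim_eq_of_orderIso Λ2, Order.krullDim_eq_of_orderIso Λ]
  -- the relation matrix over O
  set c : Matrix (Fin n) (Fin n) O :=
    Matrix.of (fun i j => ((snf.bN (fe.symm i) : Fin n → O)) j) with hc
  have hrow : ∀ i, g (fun j => c i j) = 0 := by
    intro i
    have : (fun j => c i j) = ((snf.bN (fe.symm i) : Fin n → O)) := rfl
    rw [this]
    exact (snf.bN (fe.symm i)).2
  -- determinant of c
  set a' : Fin n → O := fun i => snf.a (fe.symm i) with ha'
  set B : Matrix (Fin n) (Fin n) O := Matrix.of (fun i j => snf.bM i j) with hB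
  have hcdB : c = Matrix.diagonal a' * B := by
    ext i j
    have h1 : snf.f (fe.symm i) = i := fe.apply_symm_apply i
    rw [hc, Matrix.diagonal_mul]
    show ((snf.bN (fe.symm i) : Fin n → O)) j = a' i * snf.bM i j
    rw [snf.snf (fe.symm i), h1]
    rfl
  have hBunit : IsUnit B.det := by
    have hBt : B.transpose = (Pi.basisFun O (Fin n)).toMatrix snf.bM := by
      ext i j
      rw [Module.Basis.toMatrix_apply, Pi.basisFun_repr]
      rfl
    have : B.det = ((Pi.basisFun O (Fin n)).det snf.bM) := by
      rw [← Matrix.det_transpose, hBt, Module.Basis.det_apply]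
    rw [this]
    exact (Pi.basisFun O (Fin n)).isUnit_det snf.bM
  have hcdet : c.det = (∏ i, a' i) * B.det := by
    rw [hcdB, Matrix.det_mul, Matrix.det_diagonal]
  have hprodassoc : Associated (∏ i, a' i) (ϖ ^ ∑ i, mv i) := by
    have h1 : (∏ i, a' i) = ∏ i, snf.a i := Fintype.prod_equiv fe.symm _ _ (fun i => rfl)
    have h2 : Associated (∏ i, snf.a i) (∏ i, ϖ ^ mv i) :=
      Associated.prod Finset.univ _ _ (fun i _ => ha i)
    rw [h1]
    refine h2.trans ?_
    rw [Finset.prod_pow_eq_pow_sum]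
  have hcassoc : Associated c.det (ϖ ^ ∑ i, mv i) := by
    have h1 : Associated (∏ i, a' i) c.det := by
      rw [hcdet]
      exact ⟨hBunit.unit, by rw [IsUnit.unit_spec]⟩
    exact h1.symm.trans hprodassoc
  -- lift the relation matrix to A
  choose ch hch using fun i j => hπ (c i j)
  set z : Fin n → I := fun i => ∑ j, ch i j • xI j with hz
  have hz0 : ∀ i, I.toCotangent (z i) = 0 := by
    intro i
    rw [hz]
    simp only [map_sum, map_smul]
    have h1 : ∀ j, ch i j • I.toCotangent (xI j) = c i j • I.toCotangent (xI j) := by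
      intro j
      rw [← hch i j, hsmul]
    calc ∑ j, ch i j • I.toCotangent (xI j) = ∑ j, c i j • I.toCotangent (xI j) := by
          exact Finset.sum_congr rfl (fun j _ => h1 j)
      _ = g (fun j => c i j) := by rw [hg, Fintype.linearCombination_apply]
      _ = 0 := hrow i
  have hzsq : ∀ i, (z i : A) ∈ I * I := by
    intro i
    have := (Ideal.toCotangent_eq_zero I (z i)).mp (hz0 i)
    rwa [pow_two] at this
  -- rewrite elements of I*I in terms of the generators with coefficients in I
  have hrepr : ∀ w ∈ I * I, ∃ b : Fin n → A, (∀ j, b j ∈ I) ∧ w = ∑ j, b j * x j := by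
    intro w hw
    refine Submodule.mul_induction_on hw ?_ ?_
    · intro p hp q hq
      have hq' : q ∈ Submodule.span A (Set.range x) := by
        rw [Ideal.span] at hxspan
        rw [hxspan]
        exact hq
      obtain ⟨cc, hcc⟩ := (Submodule.mem_span_range_iff_exists_fun A).mp hq'
      refine ⟨fun j => p * cc j, fun j => Ideal.mul_mem_right _ _ hp, ?_⟩
      rw [← hcc, Finset.mul_sum]
      exact Finset.sum_congr rfl (fun j _ => by rw [smul_eq_mul]; ring)
    · rintro w1 w2 ⟨b1, hb1, rfl⟩ ⟨b2, hb2, rfl⟩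
      refine ⟨fun j => b1 j + b2 j, fun j => I.add_mem (hb1 j) (hb2 j), ?_⟩
      rw [← Finset.sum_add_distrib]
      exact Finset.sum_congr rfl (fun j _ => by ring)
  choose b hbI hbx using fun i => hrepr (z i : A) (hzsq i)
  set Mm : Matrix (Fin n) (Fin n) A := Matrix.of (fun i j => ch i j - b i j) with hMm
  have hMx : Mm.mulVec x = 0 := by
    funext i
    show ∑ j, Mm i j * x j = 0
    have h1 : (z i : A) = ∑ j, ch i j * x j := by
      rw [hz]
      push_cast
      exact Finset.sum_congr rfl (fun j _ => rfl)
    calc ∑ j, Mm i j * x j = (∑ j, ch i j * x j) - ∑ j, b i j * x j := by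
          rw [← Finset.sum_sub_distrib]
          exact Finset.sum_congr rfl (fun j _ => by show (ch i j - b i j) * x j = _; ring)
      _ = (z i : A) - (z i : A) := by rw [← h1, ← hbx i]
      _ = 0 := sub_self _
  set δ : A := Mm.det with hδ
  have hδx : ∀ j, δ * x j = 0 := by
    intro j
    have h1 : Matrix.mulVec Mm.adjugate (Matrix.mulVec Mm x) = δ • x := by
      rw [Matrix.mulVec_mulVec, Matrix.adjugate_mul, Matrix.smul_mulVec,
        Matrix.one_mulVec]
    rw [hMx, Matrix.mulVec_zero] at h1
    have := congrFun h1 j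
    simp only [Pi.zero_apply, Pi.smul_apply, smul_eq_mul] at this
    exact this.symm
  have hδann : δ ∈ I.annihilator := by
    rw [Submodule.mem_annihilator]
    intro y hy
    have hy' : y ∈ Submodule.span A (Set.range x) := by
      rw [Ideal.span] at hxspan
      rw [hxspan]
      exact hy
    obtain ⟨cc, hcc⟩ := (Submodule.mem_span_range_iff_exists_fun A).mp hy'
    rw [smul_eq_mul, ← hcc, Finset.mul_sum]
    refine Finset.sum_eq_zero (fun j _ => ?_)
    rw [smul_eq_mul, show δ * (cc j * x j) = cc j * (δ * x j) by ring, hδx j, mul_zero]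
  have hπδ : π δ = c.det := by
    rw [hδ, RingHom.map_det]
    congr 1
    ext i j
    rw [RingHom.mapMatrix_apply]
    show π (ch i j - b i j) = c i j
    rw [map_sub, hch i j]
    have : π (b i j) = 0 := by
      have := hbI i j
      rw [hI] at this
      exact RingHom.mem_ker.mp this
    rw [this, sub_zero]
  have hdη : c.det ∈ η := by
    rw [hη]
    exact hπδ ▸ Ideal.mem_map_of_mem π hδann
  have hϖη : ϖ ^ (∑ i, mv i) ∈ η := by
    obtain ⟨u, hu⟩ := hcassoc
    rw [← hu]
    exact Ideal.mul_mem_right _ _ hdη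
  -- conclude
  obtain ⟨hfl, hkr⟩ := quotient_bound hϖ η (∑ i, mv i) hϖη
  exact ⟨hfl, le_trans hkr hlow⟩
end

section
/- Let A be a Noetherian local ring of depth ≥ 1 with a surjection π : A → O onto a discrete valuation ring O such that ker(π)/ker(π)² has finite length. Then Ann_A(ker π) ∩ ker π = 0, and consequently π restricted to Ann_A(ker π) is injective. -/
universe u

open IsLocalRing

lemma pow_smul_top_eq_bot_of_finiteLength (A : Type u) [CommRing A] [IsLocalRing A]
    (M : Type u) [AddCommGroup M] [Module A M] (hfin : IsFiniteLength A M) :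
    ∃ n : ℕ, (maximalIdeal A) ^ n • (⊤ : Submodule A M) = ⊥ := by
  obtain ⟨hN, hA⟩ := isFiniteLength_iff_isNoetherian_isArtinian.mp hfin
  set m := maximalIdeal A
  have mono : Monotone (fun k : ℕ => OrderDual.toDual (m ^ k • (⊤ : Submodule A M))) := by
    intro i j hij
    exact Submodule.smul_mono_left (Ideal.pow_le_pow_right hij)
  obtain ⟨n, hn⟩ := IsArtinian.monotone_stabilizes ⟨_, mono⟩
  refine ⟨n, Submodule.eq_bot_of_le_smul_of_le_jacobson_bot m _
    (IsNoetherian.noetherian _) ?_ ?_⟩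
  · have : m ^ n • (⊤ : Submodule A M) = m ^ (n + 1) • ⊤ := hn (n+1) (Nat.le_succ n)
    rw [pow_succ, mul_comm, ← Ideal.smul_eq_mul, Submodule.smul_assoc] at this
    exact le_of_eq this
  · exact le_of_eq (IsLocalRing.jacobson_eq_maximalIdeal ⊥ bot_ne_top).symm

/-- Let A be a Noetherian local ring of depth at least 1 with a
surjection π : A → O onto a DVR such that ker(π)/ker(π)² has finite length. Then
Ann_A(ker π) ∩ ker π = 0, and consequently π restricted to Ann_A(ker π) is injective. -/
theorem annihilator_inf_kernel_eq_bot
    (A : Type u) [CommRing A] [IsNoetherianRing A] [IsLocalRing A]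
    (O : Type u) [CommRing O] [IsDomain O] [IsDiscreteValuationRing O]
    (π : A →+* O) (hπ : Function.Surjective π)
    (hfin : IsFiniteLength A (RingHom.ker π).Cotangent)
    (hdepth : ∃ x ∈ maximalIdeal A, x ∈ nonZeroDivisors A) :
    (RingHom.ker π).annihilator ⊓ RingHom.ker π = ⊥ ∧
    Set.InjOn π ((RingHom.ker π).annihilator : Set A) := by
  set I := RingHom.ker π with hI
  set J := I.annihilator ⊓ I with hJ
  set m := maximalIdeal A with hm
  -- I * J = ⊥
  have hIJ : I * J = ⊥ := by
    rw [eq_bot_iff]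
    refine Ideal.mul_le.mpr fun r hr s hs => ?_
    have := Submodule.mem_annihilator.mp hs.1 r hr
    simpa [mul_comm, smul_eq_mul] using this
  -- step 1: m^n * I ≤ I^2
  obtain ⟨n, hn⟩ := pow_smul_top_eq_bot_of_finiteLength A I.Cotangent hfin
  have hmnI : m ^ n * I ≤ I ^ 2 := by
    refine Ideal.mul_le.mpr fun r hr s hs => ?_
    have h0 : r • I.toCotangent ⟨s, hs⟩ = 0 := by
      have : r • I.toCotangent ⟨s, hs⟩ ∈ m ^ n • (⊤ : Submodule A I.Cotangent) :=
        Submodule.smul_mem_smul hr trivial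
      rw [hn] at this; simpa using this
    rw [← map_smul, Ideal.toCotangent_eq_zero] at h0
    simpa [smul_eq_mul] using h0
  -- step 2: (m^n)^k * I ≤ I^(k+1)
  have hk : ∀ k : ℕ, (m ^ n) ^ k * I ≤ I ^ (k + 1) := by
    intro k
    induction k with
    | zero => simpa using le_of_eq (pow_one I).symm
    | succ k ih =>
      calc (m ^ n) ^ (k + 1) * I = m ^ n * ((m ^ n) ^ k * I) := by ring
        _ ≤ m ^ n * I ^ (k + 1) := Ideal.mul_mono_right ih
        _ = (m ^ n * I) * I ^ k := by ring
        _ ≤ I ^ 2 * I ^ k := Ideal.mul_mono_left hmnI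
        _ = I ^ (k + 2) := by ring
  -- step 3: Artin–Rees: ∃ c, I^(c+1) ⊓ J = ⊥
  obtain ⟨c, hc⟩ := Ideal.exists_pow_inf_eq_pow_smul I (J : Submodule A A)
  have hAR : I ^ (c + 1) ⊓ J = ⊥ := by
    have h1 := hc (c + 1) (Nat.le_succ c)
    have htop : ∀ k : ℕ, I ^ k • (⊤ : Submodule A A) = I ^ k := by
      intro k; rw [Ideal.smul_eq_mul, Ideal.mul_top]
    rw [htop, htop, Nat.add_sub_cancel_left, pow_one, Ideal.smul_eq_mul] at h1
    rw [h1, eq_bot_iff, ← hIJ]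
    exact Ideal.mul_mono_right inf_le_right
  -- step 4: m^N kills J
  have hkill : (m ^ n) ^ (c + 1) * J ≤ ⊥ := by
    rw [← hAR]
    refine le_inf ?_ (Ideal.mul_le_right)
    calc (m ^ n) ^ (c + 1) * J ≤ (m ^ n) ^ (c + 1) * I := Ideal.mul_mono_right inf_le_right
      _ ≤ I ^ (c + 2) := hk (c + 1)
      _ ≤ I ^ (c + 1) := Ideal.pow_le_pow_right (by omega)
  -- step 5: J = ⊥ using depth
  obtain ⟨x₀, hx₀m, hx₀⟩ := hdepth
  have hJbot : J = ⊥ := by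
    rw [eq_bot_iff]
    intro x hx
    have hxm : x₀ ^ (n * (c + 1)) * x ∈ (⊥ : Ideal A) := by
      apply hkill
      have : x₀ ^ (n * (c + 1)) ∈ (m ^ n) ^ (c + 1) := by
        rw [← pow_mul]
        exact Ideal.pow_mem_pow hx₀m _
      exact Ideal.mul_mem_mul this hx
    have hzero : x₀ ^ (n * (c + 1)) * x = 0 := by simpa using hxm
    have hnzd : x₀ ^ (n * (c + 1)) ∈ nonZeroDivisors A := pow_mem hx₀ _
    simpa using (mul_right_mem_nonZeroDivisors_eq_zero_iff hnzd).mp (by rw [mul_comm] at hzero; exact hzero)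
  refine ⟨hJbot, fun x hx y hy hxy => ?_⟩
  have hsub : x - y ∈ J := by
    refine ⟨Submodule.sub_mem _ hx hy, ?_⟩
    show x - y ∈ RingHom.ker π
    rw [RingHom.mem_ker, map_sub, hxy, sub_self]
  rw [hJbot] at hsub
  exact sub_eq_zero.mp (by simpa using hsub)
end

section
/- Let A be a Noetherian local ring whose maximal ideal is not an associated prime (equivalently, depth(A) ≥ 1), and let π : A → O be a surjection onto a discrete valuation ring. Then there exists a non-zerodivisor x ∈ A such that π(x) is a uniformizer of O, equivalently, x together with ker(π) generates the maximal ideal of A. -/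
universe u

open IsLocalRing

/-- The associated primes of a module, with the definition Mathlib used in December 2024:
prime ideals that are the annihilator of a single element. -/
def associatedPrimesOld (R M : Type*) [CommSemiring R] [AddCommMonoid M] [Module R M] :
    Set (Ideal R) :=
  { I | I.IsPrime ∧ ∃ x : M, I = (Submodule.span R {x}).annihilator }

theorem myAss_subset {R M : Type*} [CommRing R] [AddCommGroup M] [Module R M] [IsNoetherianRing R] (N : Submodule R M) :
    associatedPrimes R M ⊆ associatedPrimes R N ∪ associatedPrimes R (M ⧸ N) := by
  rintro p hp'
  obtain ⟨hp, x, hx⟩ := isAssociatedPrime_iff.mp hp'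
  by_cases hcase : ∃ a : R, a • x ∈ N ∧ a • x ≠ 0
  · obtain ⟨a, haN, ha0⟩ := hcase
    left
    have hanp : a ∉ p := by
      intro h
      rw [hx, Submodule.mem_colon_singleton, Submodule.mem_bot] at h
      exact ha0 h
    refine isAssociatedPrime_iff.mpr ⟨hp, ⟨a • x, haN⟩, ?_⟩
    ext b
    rw [Submodule.mem_colon_singleton, Submodule.mem_bot]
    constructor
    · intro hb
      have hba : (b * a) • x = 0 := by
        have : b * a ∈ p := p.mul_mem_right a hb
        rw [hx, Submodule.mem_colon_singleton, Submodule.mem_bot] at this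
        exact this
      refine Subtype.ext ?_
      show b • (a • x) = 0
      rw [← mul_smul]; exact hba
    · intro hb
      have hba : (b * a) • x = 0 := by
        have := congrArg (N.subtype) hb
        simpa [mul_smul] using this
      have : b * a ∈ p := by
        rw [hx, Submodule.mem_colon_singleton, Submodule.mem_bot]; exact hba
      rcases hp.mem_or_mem this with h | h
      · exact h
      · exact absurd h hanp
  · push_neg at hcase
    right
    refine isAssociatedPrime_iff.mpr ⟨hp, N.mkQ x, ?_⟩
    ext b
    rw [Submodule.mem_colon_singleton, Submodule.mem_bot, hx,
      Submodule.mem_colon_singleton, Submodule.mem_bot]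
    constructor
    · intro hb
      rw [← map_smul, hb, map_zero]
    · intro hb
      rw [← map_smul, Submodule.mkQ_apply, Submodule.Quotient.mk_eq_zero] at hb
      exact hcase _ hb


theorem myAss_finite {R M : Type*} [CommRing R] [AddCommGroup M] [Module R M] [IsNoetherianRing R] [IsNoetherian R M] :
    (associatedPrimes R M).Finite := by
  obtain ⟨N, hNfin, hNmax⟩ :=
    (set_has_maximal_iff_noetherian.mpr (inferInstance : IsNoetherian R M))
      {N : Submodule R M | (associatedPrimes R (↥N)).Finite}
      ⟨⊥, by
        show (associatedPrimes R (↥(⊥ : Submodule R M))).Finite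
        rw [associatedPrimes.eq_empty_of_subsingleton]; exact Set.finite_empty⟩
  rcases eq_or_ne N ⊤ with rfl | hne
  · rw [← LinearEquiv.AssociatedPrimes.eq (Submodule.topEquiv (R := R) (M := M))]
    exact hNfin
  · exfalso
    have : Nontrivial (M ⧸ N) := Submodule.Quotient.nontrivial_iff.mpr hne
    obtain ⟨P, hP⟩ := associatedPrimes.nonempty R (M ⧸ N)
    obtain ⟨hPprime, y, hy⟩ := isAssociatedPrime_iff.mp hP
    have hy0 : y ≠ 0 := by
      rintro rfl
      apply hPprime.ne_top
      rw [hy]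
      simp [Submodule.annihilator_eq_top_iff]
    set N' : Submodule R M := Submodule.comap N.mkQ (Submodule.span R {y}) with hN'
    have hle : N ≤ N' := by
      intro z hz
      simp only [hN', Submodule.mem_comap, Submodule.mkQ_apply]
      rw [(Submodule.Quotient.mk_eq_zero N).mpr hz]
      exact Submodule.zero_mem _
    have hlt : N < N' := by
      refine lt_of_le_of_ne hle ?_
      intro h
      obtain ⟨z, hz⟩ := Submodule.Quotient.mk_surjective N y
      have hzN' : z ∈ N' := by
        simp only [hN', Submodule.mem_comap, Submodule.mkQ_apply, hz]
        exact Submodule.mem_span_singleton_self y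
      rw [← h] at hzN'
      exact hy0 (hz ▸ (Submodule.Quotient.mk_eq_zero N).mpr hzN')
    apply hNmax N' _ hlt
    -- show Ass(N') finite
    have key := myAss_subset (R := R) (M := ↥N') (Submodule.comap N'.subtype N)
    have h1 : (associatedPrimes R (↥(Submodule.comap N'.subtype N))).Finite := by
      rw [LinearEquiv.AssociatedPrimes.eq (Submodule.comapSubtypeEquivOfLe hle)]
      exact hNfin
    have h2 : (associatedPrimes R
        (↥N' ⧸ (Submodule.comap N'.subtype N))).Finite := by
      -- N' ⧸ N ≃ R∙y ≃ R ⧸ P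
      have e1 : (↥N' ⧸ (Submodule.comap N'.subtype N)) ≃ₗ[R]
          ↥(LinearMap.range (N.mkQ ∘ₗ N'.subtype)) := by
        have hker : LinearMap.ker (N.mkQ ∘ₗ N'.subtype) = Submodule.comap N'.subtype N := by
          rw [LinearMap.ker_comp, Submodule.ker_mkQ]
        exact hker ▸ LinearMap.quotKerEquivRange _
      have hrange : LinearMap.range (N.mkQ ∘ₗ N'.subtype) = Submodule.span R {y} := by
        rw [LinearMap.range_comp, Submodule.range_subtype, hN',
          Submodule.map_comap_eq_of_surjective (Submodule.mkQ_surjective N)]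
      have e2 : (R ⧸ P) ≃ₗ[R] ↥(Submodule.span R {y}) := by
        have hker : LinearMap.ker (LinearMap.toSpanSingleton R (M ⧸ N) y) = P := by
          ext a
          rw [LinearMap.mem_ker, hy, Submodule.mem_colon_singleton, Submodule.mem_bot]
          rfl
        rw [LinearMap.span_singleton_eq_range]
        exact hker ▸ LinearMap.quotKerEquivRange _
      rw [hrange] at e1
      rw [LinearEquiv.AssociatedPrimes.eq (e1.trans e2.symm)]
      rw [associatedPrimes.eq_singleton_of_isPrimary hPprime.isPrimary]
      exact Set.finite_singleton _
    exact Set.Finite.subset (h1.union h2) key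

/-- Let A be a Noetherian local ring whose maximal ideal is not an
associated prime (equivalently depth A ≥ 1), and π : A → O a surjection onto a DVR.
Then there is a nonzerodivisor x ∈ A with π(x) a uniformizer of O; equivalently,
x together with ker(π) generates the maximal ideal of A. -/
theorem exists_nonzerodivisor_mapping_to_uniformizer
    (A : Type u) [CommRing A] [IsNoetherianRing A] [IsLocalRing A]
    (O : Type u) [CommRing O] [IsDomain O] [IsDiscreteValuationRing O]
    (π : A →+* O) (hπ : Function.Surjective π)
    (hass : maximalIdeal A ∉ associatedPrimesOld A A) :
    ∃ x : A, x ∈ nonZeroDivisors A ∧ Irreducible (π x) ∧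
      Ideal.span {x} ⊔ RingHom.ker π = maximalIdeal A := by
  classical
  obtain ⟨ϖ, hϖ⟩ := IsDiscreteValuationRing.exists_irreducible O
  have hmO : maximalIdeal O = Ideal.span {ϖ} :=
    (IsDiscreteValuationRing.irreducible_iff_uniformizer ϖ).mp hϖ
  have hcm : Ideal.comap π (maximalIdeal O) = maximalIdeal A :=
    IsLocalRing.eq_maximalIdeal (Ideal.comap_isMaximal_of_surjective π hπ)
  set q : Ideal A := Ideal.comap π (maximalIdeal O ^ 2) with hq
  have hAssfin : (associatedPrimes A A).Finite := myAss_finite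
  set s : Finset (Ideal A) := insert q hAssfin.toFinset with hs
  have hprimes : ∀ i ∈ s, i ≠ q → i ≠ q → (id i).IsPrime := by
    intro i hi hiq _
    rcases Finset.mem_insert.mp hi with rfl | hmem
    · exact absurd rfl hiq
    · exact (hAssfin.mem_toFinset.mp hmem).isPrime
  have hnotsub : ¬ ((maximalIdeal A : Set A) ⊆ ⋃ i ∈ (↑s : Set (Ideal A)), (id i : Ideal A)) := by
    rw [Ideal.subset_union_prime q q hprimes]
    rintro ⟨i, his, hle⟩
    rcases Finset.mem_insert.mp his with rfl | hi
    · obtain ⟨t, ht⟩ := hπ ϖ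
      have htm : t ∈ maximalIdeal A := by
        rw [← hcm, Ideal.mem_comap, ht, hmO]
        exact Ideal.mem_span_singleton_self ϖ
      have htq : t ∈ q := hle htm
      rw [hq, Ideal.mem_comap, ht, hmO, Ideal.span_singleton_pow,
        Ideal.mem_span_singleton] at htq
      obtain ⟨c, hc⟩ := htq
      have : IsUnit ϖ := by
        have hϖ0 : ϖ ≠ 0 := hϖ.ne_zero
        have : ϖ * 1 = ϖ * (ϖ * c) := by rw [mul_one]; nth_rewrite 1 [hc]; ring
        have := mul_left_cancel₀ hϖ0 this
        exact IsUnit.of_mul_eq_one _ this.symm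
      exact hϖ.not_isUnit this
    · have hiass : i ∈ associatedPrimes A A := hAssfin.mem_toFinset.mp hi
      have hile : i ≤ maximalIdeal A :=
        IsLocalRing.le_maximalIdeal hiass.isPrime.ne_top
      exact hass (by
        obtain ⟨hp, z, hz⟩ := isAssociatedPrime_iff.mp (show IsAssociatedPrime (maximalIdeal A) A from
          (show maximalIdeal A = i from le_antisymm hle hile) ▸ hiass)
        exact ⟨hp, z, by
          rw [hz]; ext r
          rw [Submodule.mem_colon_singleton, Submodule.mem_bot,
            Submodule.mem_annihilator_span_singleton]⟩)
  obtain ⟨x, hxm, hxnot⟩ := Set.not_subset.mp hnotsub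
  simp only [Set.mem_iUnion, not_exists, Finset.coe_insert, Set.mem_insert_iff,
    Finset.mem_coe, id_eq, SetLike.mem_coe, exists_prop, not_and, not_or] at hxnot
  have hxq : x ∉ q := hxnot q (Finset.mem_insert_self _ _)
  have hxass : ∀ p ∈ associatedPrimes A A, x ∉ p := fun p hp =>
    hxnot p (Finset.mem_insert_of_mem (hAssfin.mem_toFinset.mpr hp))
  -- nonzerodivisor
  have hxnzd : x ∈ nonZeroDivisors A := by
    rw [mem_nonZeroDivisors_iff_right]
    intro c hc
    by_contra hc0
    have hx_zd : x ∈ {r : A | ∃ m : A, m ≠ 0 ∧ r • m = 0} :=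
      ⟨c, hc0, by rw [smul_eq_mul, mul_comm]; exact hc⟩
    have hx2 : x ∈ ⋃ p ∈ associatedPrimes A A, (p : Set A) := by
      rw [biUnion_associatedPrimes_eq_zero_divisors]; exact hx_zd
    obtain ⟨p, hp, hxp⟩ := Set.mem_iUnion₂.mp hx2
    exact hxass p hp hxp
  -- irreducible
  have hπxm : π x ∈ maximalIdeal O := by rw [← hcm] at hxm; exact hxm
  obtain ⟨c, hc⟩ := (Submodule.mem_span_singleton).mp (hmO ▸ hπxm)
  have hcunit : IsUnit c := by
    by_contra hcu
    apply hxq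
    rw [hq, Ideal.mem_comap, hmO, Ideal.span_singleton_pow, Ideal.mem_span_singleton]
    have hcm' : c ∈ maximalIdeal O := hcu
    rw [hmO, Ideal.mem_span_singleton] at hcm'
    obtain ⟨d, hd⟩ := hcm'
    exact ⟨d, by rw [← hc, hd, smul_eq_mul]; ring⟩
  have hirr : Irreducible (π x) := by
    have : Associated ϖ (π x) := ⟨hcunit.unit, by
      rw [IsUnit.unit_spec, ← hc, smul_eq_mul, mul_comm]⟩
    exact this.irreducible hϖ
  have hspan : maximalIdeal O = Ideal.span {π x} :=
    (IsDiscreteValuationRing.irreducible_iff_uniformizer _).mp hirr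
  refine ⟨x, hxnzd, hirr, ?_⟩
  apply le_antisymm
  · apply sup_le
    · rw [Ideal.span_le, Set.singleton_subset_iff]; exact hxm
    · intro k hk
      rw [RingHom.mem_ker] at hk
      rw [← hcm, Ideal.mem_comap, hk]
      exact (maximalIdeal O).zero_mem
  · intro y hy
    have hπy : π y ∈ Ideal.span {π x} := by
      rw [← hspan]
      exact (hcm ▸ hy : y ∈ Ideal.comap π (maximalIdeal O))
    obtain ⟨b, hb⟩ := Ideal.mem_span_singleton.mp hπy
    obtain ⟨a, ha⟩ := hπ b
    have hker : y - a * x ∈ RingHom.ker π := by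
      rw [RingHom.mem_ker, map_sub, map_mul, ha, hb]; ring
    have : y = a * x + (y - a * x) := by ring
    rw [this]
    exact Submodule.add_mem_sup (Ideal.mem_span_singleton.mpr ⟨a, mul_comm a x⟩) hker
end

section
/- Let t ≥ 2 and k a finite field of characteristic p ≥ 5. The matrix A = [[1, p^{t-2}],[0,1]] in SL₂(W(k)/p^{t-1}W(k)) has order p, but there is no element of order p in SL₂(W(k)/p^{t}W(k)) reducing to A under the reduction map SL₂(W(k)/p^t) → SL₂(W(k)/p^{t-1}). -/
/-- The ring W(k)/p^t W(k). -/
noncomputable def Wq (p : ℕ) [Fact p.Prime] (k : Type) [CommRing k] (t : ℕ) :=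
  WittVector p k ⧸ Ideal.span {(p : WittVector p k) ^ t}

noncomputable instance (p : ℕ) [Fact p.Prime] (k : Type) [CommRing k] (t : ℕ) :
    CommRing (Wq p k t) :=
  Ideal.Quotient.commRing _

/-- The reduction map W(k)/p^t → W(k)/p^{t-1}. -/
noncomputable def redq (p : ℕ) [Fact p.Prime] (k : Type) [CommRing k] (t : ℕ) :
    Wq p k t →+* Wq p k (t - 1) :=
  Ideal.Quotient.factor
    (Ideal.span_singleton_le_span_singleton.mpr (pow_dvd_pow _ (Nat.sub_le t 1)))

section aux

variable (p : ℕ) [Fact p.Prime] (k : Type) [Field k] [CharP k p]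

/-- The quotient map `W(k) → W(k)/p^t`, typed with `Wq`. -/
noncomputable def WqMk (t : ℕ) : WittVector p k →+* Wq p k t :=
  Ideal.Quotient.mk _

lemma WqMk_surjective (t : ℕ) : Function.Surjective (WqMk p k t) :=
  Ideal.Quotient.mk_surjective

lemma WqMk_eq_zero_iff (t : ℕ) (x : WittVector p k) :
    WqMk p k t x = 0 ↔ (p : WittVector p k) ^ t ∣ x := by
  rw [show ((p : WittVector p k) ^ t ∣ x) ↔ x ∈ Ideal.span {(p : WittVector p k) ^ t} from
    (Ideal.mem_span_singleton).symm]
  exact Ideal.Quotient.eq_zero_iff_mem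

lemma redq_WqMk (t : ℕ) (x : WittVector p k) :
    redq p k t (WqMk p k t x) = WqMk p k (t - 1) x := rfl

lemma WqMk_natCast (t : ℕ) : WqMk p k t (p : WittVector p k) = (p : Wq p k t) :=
  map_natCast _ p

lemma WqMk_pow (t m : ℕ) : WqMk p k t ((p : WittVector p k) ^ m) = (p : Wq p k t) ^ m := by
  rw [map_pow, WqMk_natCast]

lemma Wq.pow_eq_zero (t m : ℕ) (h : t ≤ m) : (p : Wq p k t) ^ m = 0 := by
  rw [← WqMk_pow, WqMk_eq_zero_iff]
  exact pow_dvd_pow _ h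

lemma Wq.pow_ne_zero (t m : ℕ) (h : m < t) : (p : Wq p k t) ^ m ≠ 0 := by
  have hirr : Irreducible (p : WittVector p k) := WittVector.irreducible p
  intro h0
  rw [← WqMk_pow, WqMk_eq_zero_iff] at h0
  have hdvd : (p : WittVector p k) ^ (m + 1) ∣ (p : WittVector p k) ^ m :=
    dvd_trans (pow_dvd_pow _ h) h0
  obtain ⟨x, hx⟩ := hdvd
  rw [pow_succ, mul_assoc] at hx
  have hpm : (p : WittVector p k) ^ m ≠ 0 := _root_.pow_ne_zero m hirr.ne_zero
  have h1 : (1 : WittVector p k) = (p : WittVector p k) * x :=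
    mul_left_cancel₀ hpm (by rw [← hx, mul_one])
  exact hirr.not_isUnit (IsUnit.of_mul_eq_one _ h1.symm)

lemma Wq.redq_eq_zero_iff (t : ℕ) (x : Wq p k t) :
    redq p k t x = 0 ↔ ∃ y, x = (p : Wq p k t) ^ (t - 1) * y := by
  constructor
  · intro hx
    obtain ⟨w, rfl⟩ := WqMk_surjective p k t x
    rw [redq_WqMk, WqMk_eq_zero_iff] at hx
    obtain ⟨z, hz⟩ := hx
    exact ⟨WqMk p k t z, by rw [hz, map_mul, WqMk_pow]⟩
  · rintro ⟨y, rfl⟩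
    rw [map_mul, map_pow, map_natCast, Wq.pow_eq_zero p k (t-1) (t-1) le_rfl, zero_mul]

lemma unipow (R : Type*) [CommRing R] (x : R) (n : ℕ) :
    (!![1, x; 0, 1] : Matrix (Fin 2) (Fin 2) R) ^ n = !![1, (n : R) * x; 0, 1] := by
  induction n with
  | zero => simp [Matrix.one_fin_two]
  | succ n ih =>
    rw [pow_succ, ih, Matrix.mul_fin_two]
    push_cast
    congr 1 <;> ring_nf

end aux

/-- The unipotent matrix [[1, p^{t-2}], [0, 1]] in SL₂(W(k)/p^{t-1}). -/
noncomputable def Amat (p : ℕ) [Fact p.Prime] (k : Type) [CommRing k] (t : ℕ) :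
    Matrix.SpecialLinearGroup (Fin 2) (Wq p k (t - 1)) :=
  ⟨!![1, (p : Wq p k (t - 1)) ^ (t - 2); 0, 1], by simp [Matrix.det_fin_two_of]⟩

/-- Lemma lem:nonsplit (2), SL₂ case. For t ≥ 2 and k a finite field
of characteristic p ≥ 5, the matrix A = [[1, p^{t-2}],[0,1]] in SL₂(W(k)/p^{t-1}) has
order p, but no element of order p of SL₂(W(k)/p^t) reduces to A. -/
theorem no_order_p_lift_of_unipotent
    (p : ℕ) [Fact p.Prime] (hp : 5 ≤ p)
    (k : Type) [Field k] [Finite k] [CharP k p]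
    (t : ℕ) (ht : 2 ≤ t) :
    orderOf (Amat p k t) = p ∧
    ¬ ∃ B : Matrix.SpecialLinearGroup (Fin 2) (Wq p k t),
        orderOf B = p ∧ Matrix.SpecialLinearGroup.map (redq p k t) B = Amat p k t := by
  constructor
  · -- order of Amat is p
    apply orderOf_eq_prime
    · apply Subtype.ext
      rw [Matrix.SpecialLinearGroup.coe_pow]
      show (!![1, (p : Wq p k (t - 1)) ^ (t - 2); 0, 1]) ^ p = _
      rw [unipow]
      have h0 : (p : Wq p k (t-1)) * (p : Wq p k (t-1)) ^ (t - 2) = 0 := by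
        rw [← pow_succ', show t - 2 + 1 = t - 1 by omega]
        exact Wq.pow_eq_zero p k (t-1) (t-1) le_rfl
      rw [h0, Matrix.SpecialLinearGroup.coe_one, Matrix.one_fin_two]
    · intro h
      have h01 := congrFun (congrFun (congrArg Subtype.val h) 0) 1
      simp only [Amat, Matrix.SpecialLinearGroup.coe_one] at h01
      simp [Matrix.one_apply] at h01
      exact Wq.pow_ne_zero p k (t-1) (t-2) (by omega) h01
  · rintro ⟨B, hBord, hBred⟩
    set R := Wq p k t with hR
    set q : R := (p : R) ^ (t - 1) with hqdef
    have hq_ne : q ≠ 0 := Wq.pow_ne_zero p k t (t-1) (by omega)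
    have hqq : q * q = 0 := by
      rw [hqdef, ← pow_add]; exact Wq.pow_eq_zero p k t _ (by omega)
    have hpq : (p : R) * q = 0 := by
      rw [hqdef, ← pow_succ']; exact Wq.pow_eq_zero p k t _ (by omega)
    set M : Matrix (Fin 2) (Fin 2) R := (B : Matrix (Fin 2) (Fin 2) R) with hM
    obtain ⟨a, b, c, d, hMeta⟩ : ∃ a b c d, M = !![a, b; c, d] :=
      ⟨_, _, _, _, Matrix.eta_fin_two M⟩
    have hdet : a * d - b * c = 1 := by
      have h2 := B.2
      rw [show (B : Matrix (Fin 2) (Fin 2) R) = M from rfl, hMeta,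
        Matrix.det_fin_two_of] at h2
      exact h2
    have hred : ∀ i j, redq p k t ((!![a, b; c, d] : Matrix (Fin 2) (Fin 2) R) i j)
        = (Amat p k t : Matrix (Fin 2) (Fin 2) (Wq p k (t-1))) i j := by
      intro i j
      have h3 := congrFun (congrFun (congrArg Subtype.val hBred) i) j
      rw [Matrix.SpecialLinearGroup.map_apply_coe] at h3
      rw [show (B : Matrix (Fin 2) (Fin 2) R) = M from rfl, hMeta] at h3
      exact h3
    have hA00 : (Amat p k t : Matrix (Fin 2) (Fin 2) (Wq p k (t-1))) 0 0 = 1 := by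
      simp [Amat]
    have hA01 : (Amat p k t : Matrix (Fin 2) (Fin 2) (Wq p k (t-1))) 0 1
        = (p : Wq p k (t-1)) ^ (t - 2) := by simp [Amat]
    have hA11 : (Amat p k t : Matrix (Fin 2) (Fin 2) (Wq p k (t-1))) 1 1 = 1 := by
      simp [Amat]
    have h00 := hred 0 0
    have h01 := hred 0 1
    have h11 := hred 1 1
    simp only [Matrix.of_apply, Matrix.cons_val', Matrix.cons_val_zero,
      Matrix.cons_val_one, Matrix.head_cons, Matrix.empty_val',
      Matrix.cons_val_fin_one, Matrix.head_fin_const] at h00 h01 h11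
    obtain ⟨α, hα⟩ : ∃ y, a - 1 = q * y := by
      rw [← Wq.redq_eq_zero_iff, map_sub, map_one, h00, hA00, sub_self]
    obtain ⟨β, hβ⟩ : ∃ y, b - (p : R) ^ (t - 2) = q * y := by
      rw [← Wq.redq_eq_zero_iff, map_sub, map_pow, map_natCast, h01, hA01, sub_self]
    obtain ⟨δ, hδ⟩ : ∃ y, d - 1 = q * y := by
      rw [← Wq.redq_eq_zero_iff, map_sub, map_one, h11, hA11, sub_self]
    set Y : Matrix (Fin 2) (Fin 2) R := M - 1 with hY
    set ε : R := a + d - 2 with hε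
    obtain ⟨s, hs⟩ : ∃ s, ε = q * s := by
      refine ⟨α + δ, ?_⟩
      rw [hε, mul_add, ← hα, ← hδ]; ring
    have hεε : ε * ε = 0 := by
      rw [hs, show q * s * (q * s) = q * q * (s * s) by ring, hqq, zero_mul]
    have hpε : (p : R) * ε = 0 := by rw [hs, ← mul_assoc, hpq, zero_mul]
    have hCH : M * M = (a + d) • M - 1 := by
      rw [hMeta]
      ext i j
      fin_cases i <;> fin_cases j <;>
        simp [Matrix.mul_apply, Fin.sum_univ_two, Matrix.one_apply] <;>
        first
          | linear_combination hdet
          | linear_combination -hdet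
          | linear_combination 2*hdet
          | linear_combination (-2 : R)*hdet
          | ring
    have hM1Y : M = 1 + Y := by rw [hY]; abel
    have hY2 : Y ^ 2 = ε • (1 + Y) := by
      rw [← hM1Y, pow_two, hY]
      have e1 : (M - 1) * (M - 1) = M * (M - 1) - 1 * (M - 1) := sub_mul _ _ _
      have e2 : M * (M - 1) = M * M - M * 1 := mul_sub _ _ _
      have e3 : M * (1 : Matrix (Fin 2) (Fin 2) R) = M := mul_one _
      have e4 : (1 : Matrix (Fin 2) (Fin 2) R) * (M - 1) = M - 1 := one_mul _
      have e5 : ((a + d) • M - 1) - M - M + 1 = (a + d) • M - (2 : R) • M := by rw [two_smul]; abel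
      have e6 : (a + d) • M - (2 : R) • M = ε • M := by rw [hε, sub_smul]
      rw [← e6, ← e5, ← hCH, e1, e2, e3, e4]
      abel
    have hY3 : Y ^ 3 = ε • Y := by
      rw [pow_succ, hY2, smul_mul_assoc, add_mul, one_mul, ← pow_two, hY2,
        smul_add, smul_smul, hεε, zero_smul, add_zero]
    have hY4 : Y ^ 4 = (0 : Matrix (Fin 2) (Fin 2) R) := by
      rw [pow_succ, hY3, smul_mul_assoc, ← pow_two, hY2, smul_smul, hεε, zero_smul]
    have hpY2 : (p : ℕ) • (Y ^ 2) = 0 := by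
      rw [hY2, ← Nat.cast_smul_eq_nsmul R, smul_smul, hpε, zero_smul]
    have hpY3 : (p : ℕ) • (Y ^ 3) = 0 := by
      rw [hY3, ← Nat.cast_smul_eq_nsmul R, smul_smul, hpε, zero_smul]
    have hmulp : ∀ Z : Matrix (Fin 2) (Fin 2) R,
        Z * ((p : ℕ) : Matrix (Fin 2) (Fin 2) R) = (p : ℕ) • Z := by
      intro Z
      rw [(Nat.commute_cast Z p).eq, ← nsmul_eq_mul]
    have hbin : M ^ p = ∑ m ∈ Finset.range (p + 1),
        Y ^ m * 1 ^ (p - m) * (p.choose m : Matrix (Fin 2) (Fin 2) R) := by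
      rw [hM1Y, add_comm]
      exact (Commute.one_right Y).add_pow p
    have hterm0 : ∀ m ∈ Finset.range (p + 1), m ∉ Finset.range 2 →
        Y ^ m * 1 ^ (p - m) * (p.choose m : Matrix (Fin 2) (Fin 2) R) = 0 := by
      intro m _ hm2
      rw [Finset.mem_range, not_lt] at hm2
      rw [one_pow, mul_one]
      by_cases h4 : 4 ≤ m
      · rw [show m = 4 + (m - 4) by omega, pow_add, hY4, zero_mul, zero_mul]
      · have hm : m = 2 ∨ m = 3 := by omega
        obtain ⟨K, hK⟩ := (Fact.out : p.Prime).dvd_choose_self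
          (k := m) (by omega) (by omega)
        rw [hK, Nat.cast_mul, show Y ^ m * ((p : Matrix (Fin 2) (Fin 2) R) * (K : Matrix (Fin 2) (Fin 2) R)) = Y ^ m * (p : Matrix (Fin 2) (Fin 2) R) * K from (mul_assoc _ _ _).symm, hmulp]
        rcases hm with rfl | rfl
        · rw [hpY2, zero_mul]
        · rw [hpY3, zero_mul]
    have hMp : M ^ p = 1 + (p : ℕ) • Y := by
      rw [hbin, ← Finset.sum_subset (Finset.range_subset_range.mpr (by omega : 2 ≤ p + 1)) hterm0]
      rw [Finset.sum_range_succ, Finset.sum_range_one]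
      simp [hmulp]
      exact Nat.cast_one
    have hBp : M ^ p = 1 := by
      have h5 := pow_orderOf_eq_one B
      rw [hBord] at h5
      have h6 := congrArg Subtype.val h5
      rw [Matrix.SpecialLinearGroup.coe_pow] at h6
      exact h6
    have hpY : (p : ℕ) • Y = 0 := by
      have := hBp.symm.trans hMp
      rwa [left_eq_add] at this
    have hpb : (p : R) * b = 0 := by
      have h7 := congrFun (congrFun hpY 0) 1
      rw [Matrix.smul_apply] at h7
      have h8 : Y 0 1 = b := by
        rw [hY, Matrix.sub_apply, hMeta]
        simp [Matrix.one_apply]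
      rw [h8, Matrix.zero_apply, nsmul_eq_mul] at h7
      exact h7
    have hbval : b = (p : R) ^ (t - 2) + q * β := by linear_combination hβ
    rw [hbval, mul_add, ← mul_assoc, hpq, zero_mul, add_zero, ← pow_succ',
      show t - 2 + 1 = t - 1 by omega] at hpb
    exact hq_ne hpb
end

section
/- Let G be a split reductive group scheme over W(k) with k a finite field of characteristic p greater than the Coxeter number of G, let T be a split maximal torus of G, and let x̄ ∈ T(k) be a regular semisimple element. If x ∈ G(W(k)) reduces to x̄, then the identity component of the scheme-theoretic centralizer C⁰_G(x) is a split maximal torus T′ of G over W(k) with T′_k = T_k, and x ∈ T′(W(k)). -/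
namespace RSLaux

open WittVector Function

variable {p : ℕ} [hp : Fact p.Prime] {k : Type} [Field k] [CharP k p] [PerfectRing k p]

local notation "𝕎" => WittVector p

lemma iterV_coeff_eq_zero (m : ℕ) (w : 𝕎 k) : ∀ i < m, (verschiebung^[m] w).coeff i = 0 := by
  induction m with
  | zero => intro i hi; omega
  | succ m ih =>
    intro i hi
    rw [Function.iterate_succ_apply']
    cases i with
    | zero => exact verschiebung_coeff_zero _
    | succ i => rw [verschiebung_coeff_succ]; exact ih i (by omega)

lemma iterV_iterF (m : ℕ) (b : 𝕎 k) :
    verschiebung^[m] (frobenius^[m] b) = b * (p : 𝕎 k) ^ m := by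
  induction m generalizing b with
  | zero => simp
  | succ m ih =>
    have hF : (frobenius^[m+1] b : 𝕎 k) = frobenius^[m] (frobenius b) :=
      Function.iterate_succ_apply _ _ _
    rw [hF, Function.iterate_succ_apply' (f := (verschiebung : 𝕎 k → 𝕎 k)), ih,
      show (frobenius b) * (p : 𝕎 k) ^ m = frobenius (b * (p : 𝕎 k) ^ m) by
        rw [map_mul, map_pow, map_natCast],
      verschiebung_frobenius]
    ring

lemma pow_dvd_iff (m : ℕ) (a : 𝕎 k) :
    (p : 𝕎 k) ^ m ∣ a ↔ ∀ i < m, a.coeff i = 0 := by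
  constructor
  · rintro ⟨z, rfl⟩ i hi
    rw [mul_comm, ← iterV_iterF]
    exact iterV_coeff_eq_zero m _ i hi
  · intro h
    obtain ⟨b, hb⟩ := ((frobenius_bijective p k).surjective.iterate m) (a.shift m)
    exact ⟨b, by rw [mul_comm, ← iterV_iterF, hb, ← eq_iterate_verschiebung h]⟩

lemma dvd_iff_truncate_eq (m : ℕ) (a b : 𝕎 k) :
    (p : 𝕎 k) ^ m ∣ a - b ↔ truncate m a = truncate m b := by
  have h1 : ((p : 𝕎 k) ^ m ∣ a - b) ↔ truncate m (a - b) = 0 := by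
    rw [pow_dvd_iff]
    constructor
    · intro h
      ext i
      rw [coeff_truncate, TruncatedWittVector.coeff_zero]
      exact h i i.isLt
    · intro h i hi
      have := congrArg (fun t => TruncatedWittVector.coeff ⟨i, hi⟩ t) h
      simpa only [coeff_truncate, TruncatedWittVector.coeff_zero] using this
  rw [h1, map_sub, sub_eq_zero]

lemma coeff_eq_of_dvd {m : ℕ} {a b : 𝕎 k} (h : (p : 𝕎 k) ^ m ∣ a - b)
    {i : ℕ} (hi : i < m) : a.coeff i = b.coeff i := by
  have ht := (dvd_iff_truncate_eq m a b).mp h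
  have := congrArg (fun t => TruncatedWittVector.coeff ⟨i, hi⟩ t) ht
  simpa [coeff_truncate] using this

lemma eq_zero_of_forall_pow_dvd (a : 𝕎 k) (h : ∀ m, (p : 𝕎 k) ^ m ∣ a) : a = 0 := by
  ext i
  rw [zero_coeff]
  exact (pow_dvd_iff (i + 1) a).mp (h (i + 1)) i (Nat.lt_succ_self i)

lemma limit (f : ℕ → 𝕎 k) (hf : ∀ m, (p : 𝕎 k) ^ (m + 1) ∣ f (m + 1) - f m) :
    ∃ L, ∀ m, (p : 𝕎 k) ^ (m + 1) ∣ L - f m := by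
  have key : ∀ m l, (p : 𝕎 k) ^ (m + 1) ∣ f (m + l) - f m := by
    intro m l
    induction l with
    | zero => simp
    | succ l ih =>
      have h2 : (p : 𝕎 k) ^ (m + 1) ∣ f (m + l + 1) - f (m + l) :=
        (pow_dvd_pow _ (by omega)).trans (hf (m + l))
      have : f (m + (l + 1)) - f m = (f (m + l + 1) - f (m + l)) + (f (m + l) - f m) := by
        rw [show m + (l+1) = m + l + 1 by omega]; ring
      rw [this]
      exact dvd_add h2 ih
  refine ⟨WittVector.mk p (fun i => (f i).coeff i), fun m => ?_⟩
  rw [dvd_iff_truncate_eq]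
  ext i
  rw [coeff_truncate, coeff_truncate]
  show (f (i : ℕ)).coeff i = (f m).coeff i
  have hle : (i : ℕ) ≤ m := by omega
  have : (p : 𝕎 k) ^ ((i : ℕ) + 1) ∣ f m - f (i : ℕ) := by
    obtain ⟨l, hl⟩ : ∃ l, m = (i : ℕ) + l := ⟨m - i, by omega⟩
    have hk := key (i : ℕ) l
    rw [← hl] at hk; exact hk
  exact (coeff_eq_of_dvd this (Nat.lt_succ_self _)).symm

set_option linter.unusedSectionVars false

variable {n : ℕ}

/-- Entrywise congruence of matrices modulo `p^m`. -/
def MMod (m : ℕ) (A B : Matrix (Fin n) (Fin n) (𝕎 k)) : Prop :=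
  ∀ i j, (p : 𝕎 k) ^ m ∣ A i j - B i j

lemma mmod_refl (m : ℕ) (A : Matrix (Fin n) (Fin n) (𝕎 k)) : MMod m A A := by
  intro i j; simp

lemma mmod_add {m : ℕ} {A B C D : Matrix (Fin n) (Fin n) (𝕎 k)}
    (h1 : MMod m A B) (h2 : MMod m C D) : MMod m (A + C) (B + D) := by
  intro i j
  have := dvd_add (h1 i j) (h2 i j)
  have he : (A + C) i j - (B + D) i j = (A i j - B i j) + (C i j - D i j) := by
    simp [Matrix.add_apply]; ring
  rw [he]; exact this

lemma mmod_sub {m : ℕ} {A B C D : Matrix (Fin n) (Fin n) (𝕎 k)}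
    (h1 : MMod m A B) (h2 : MMod m C D) : MMod m (A - C) (B - D) := by
  intro i j
  have := dvd_sub (h1 i j) (h2 i j)
  have he : (A - C) i j - (B - D) i j = (A i j - B i j) - (C i j - D i j) := by
    simp [Matrix.sub_apply]; ring
  rw [he]; exact this

lemma mmod_mul {m : ℕ} {A B C D : Matrix (Fin n) (Fin n) (𝕎 k)}
    (h1 : MMod m A B) (h2 : MMod m C D) : MMod m (A * C) (B * D) := by
  intro i j
  rw [Matrix.mul_apply, Matrix.mul_apply, ← Finset.sum_sub_distrib]
  refine Finset.dvd_sum fun l _ => ?_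
  have he : A i l * C l j - B i l * D l j
      = A i l * (C l j - D l j) + (A i l - B i l) * D l j := by ring
  rw [he]
  exact dvd_add ((h2 l j).mul_left _) ((h1 i l).mul_right _)

lemma mmod_mono {m' m : ℕ} (hm : m' ≤ m) {A B : Matrix (Fin n) (Fin n) (𝕎 k)}
    (h : MMod m A B) : MMod m' A B :=
  fun i j => (pow_dvd_pow _ hm).trans (h i j)

lemma mmod_trans {m : ℕ} {A B C : Matrix (Fin n) (Fin n) (𝕎 k)}
    (h1 : MMod m A B) (h2 : MMod m B C) : MMod m A C := by
  intro i j
  have := dvd_add (h1 i j) (h2 i j)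
  rwa [sub_add_sub_cancel] at this

lemma step_ex {m : ℕ} {x P D : Matrix (Fin n) (Fin n) (𝕎 k)}
    (hunit : ∀ i j, i ≠ j → IsUnit (x j j - x i i))
    (hx1 : MMod 1 x (Matrix.diagonal fun i => x i i))
    (hD : D.IsDiag) (hP1 : MMod 1 P 1)
    (hDx : MMod 1 D (Matrix.diagonal fun i => x i i))
    (hPx : MMod (m + 1) (P * x) (D * P)) :
    ∃ PD : Matrix (Fin n) (Fin n) (𝕎 k) × Matrix (Fin n) (Fin n) (𝕎 k),
      (PD.2.IsDiag ∧ MMod 1 PD.1 1 ∧ MMod 1 PD.2 (Matrix.diagonal fun i => x i i) ∧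
        MMod (m + 2) (PD.1 * x) (PD.2 * PD.1)) ∧
      MMod (m + 1) PD.1 P ∧ MMod (m + 1) PD.2 D := by
  classical
  set a : 𝕎 k := (p : 𝕎 k) ^ (m + 1) with ha
  have hFex : ∀ i j, ∃ c, (P * x) i j - (D * P) i j = a * c := fun i j => (hPx i j)
  choose F hF using hFex
  set Fm : Matrix (Fin n) (Fin n) (𝕎 k) := Matrix.of F with hFm
  set C : Matrix (Fin n) (Fin n) (𝕎 k) :=
    Matrix.of fun i j => if i = j then 0 else -(Ring.inverse (x j j - x i i)) * F i j with hC
  set Δ : Matrix (Fin n) (Fin n) (𝕎 k) := Matrix.diagonal fun i => F i i with hΔ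
  set xd : Matrix (Fin n) (Fin n) (𝕎 k) := Matrix.diagonal fun i => x i i with hxd
  have hPxeq : P * x = D * P + a • Fm := by
    refine Matrix.ext fun i j => ?_
    simp only [Matrix.add_apply, Matrix.smul_apply, smul_eq_mul, hFm, Matrix.of_apply]
    linear_combination hF i j
  have hid : Fm + C * xd - xd * C - Δ = 0 := by
    refine Matrix.ext fun i j => ?_
    by_cases hij : i = j
    · subst hij
      simp only [Matrix.sub_apply, Matrix.add_apply, Matrix.mul_diagonal,
        Matrix.diagonal_mul, Matrix.of_apply, Matrix.zero_apply, hFm, hC, hΔ, hxd,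
        Matrix.diagonal_apply_eq]
      ring
    · have hu := Ring.mul_inverse_cancel _ (hunit i j hij)
      simp only [Matrix.sub_apply, Matrix.add_apply, Matrix.mul_diagonal,
        Matrix.diagonal_mul, Matrix.of_apply, Matrix.zero_apply, hFm, hC, hΔ, hxd,
        Matrix.diagonal_apply_ne _ hij, if_neg hij]
      linear_combination (-(F i j)) * hu
  have hexp : ((1 + a • C) * P) * x - (D + a • Δ) * ((1 + a • C) * P)
      = a • (Fm + C * (P * x) - D * (C * P) - Δ * P) - (a * a) • (Δ * (C * P)) := by
    simp only [add_mul, mul_add, Matrix.mul_assoc, Matrix.smul_mul, Matrix.mul_smul,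
      one_mul, mul_one, smul_sub, smul_add, smul_smul]
    rw [hPxeq]
    simp only [mul_add, smul_add, Matrix.mul_smul, smul_smul]
    module
  have hG : MMod 1 (Fm + C * (P * x) - D * (C * P) - Δ * P) 0 := by
    have h1 : MMod 1 (P * x) xd := by
      have h0 := mmod_mul hP1 hx1
      rwa [one_mul] at h0
    have h2 : MMod 1 (C * (P * x)) (C * xd) := mmod_mul (mmod_refl _ C) h1
    have h3 : MMod 1 (D * (C * P)) (xd * C) := by
      have h0 := mmod_mul hDx (mmod_mul (mmod_refl 1 C) hP1)
      rwa [mul_one] at h0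
    have h4 : MMod 1 (Δ * P) Δ := by
      have h0 := mmod_mul (mmod_refl 1 Δ) hP1
      rwa [mul_one] at h0
    have h5 := mmod_sub (mmod_sub (mmod_add (mmod_refl 1 Fm) h2) h3) h4
    rwa [hid] at h5
  have hdvd_aux : ∀ (M : Matrix (Fin n) (Fin n) (𝕎 k)) i j, MMod 1 M 0 →
      (p : 𝕎 k) ∣ M i j := by
    intro M i j h
    have := h i j
    simpa using this
  refine ⟨⟨(1 + a • C) * P, D + a • Δ⟩, ⟨?_, ?_, ?_, ?_⟩, ?_, ?_⟩
  · -- IsDiag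
    intro i j hij
    simp only [Matrix.add_apply, Matrix.smul_apply, hD hij, hΔ,
      Matrix.diagonal_apply_ne _ hij, smul_eq_mul, mul_zero, add_zero]
  · -- MMod 1 P' 1
    intro i j
    have he : ((1 + a • C) * P) i j - (1 : Matrix (Fin n) (Fin n) (𝕎 k)) i j
        = (P i j - (1 : Matrix (Fin n) (Fin n) (𝕎 k)) i j) + a * (C * P) i j := by
      have h0 : (1 + a • C) * P = P + a • (C * P) := by
        rw [add_mul, one_mul, Matrix.smul_mul]
      rw [h0]
      simp only [Matrix.add_apply, Matrix.smul_apply, smul_eq_mul]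
      ring
    rw [he, pow_one]
    refine dvd_add ?_ ?_
    · have := hP1 i j; rwa [pow_one] at this
    · exact ((dvd_pow_self (p : 𝕎 k) (Nat.succ_ne_zero m)).mul_right _)
  · -- MMod 1 D' xd
    intro i j
    have he : (D + a • Δ) i j - xd i j = (D i j - xd i j) + a * Δ i j := by
      simp only [Matrix.add_apply, Matrix.smul_apply, smul_eq_mul]; ring
    rw [he, pow_one]
    refine dvd_add ?_ ?_
    · have := hDx i j; rwa [pow_one] at this
    · exact ((dvd_pow_self (p : 𝕎 k) (Nat.succ_ne_zero m)).mul_right _)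
  · -- main congruence at level m+2
    intro i j
    have he := congrArg (fun M : Matrix (Fin n) (Fin n) (𝕎 k) => M i j) hexp
    simp only [Matrix.sub_apply, Matrix.add_apply, Matrix.smul_apply, smul_eq_mul] at he
    rw [he]
    refine dvd_sub ?_ ?_
    · obtain ⟨c, hc⟩ := hdvd_aux _ i j hG
      simp only [Matrix.sub_apply, Matrix.add_apply] at hc
      refine ⟨c, ?_⟩
      rw [hc, ha]; ring
    · exact dvd_mul_of_dvd_left ⟨(p : 𝕎 k) ^ m, by rw [ha]; ring⟩ _
  · -- MMod (m+1) P' P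
    intro i j
    have he : ((1 + a • C) * P) i j - P i j = a * (C * P) i j := by
      have h0 : (1 + a • C) * P = P + a • (C * P) := by
        rw [add_mul, one_mul, Matrix.smul_mul]
      rw [h0]; simp only [Matrix.add_apply, Matrix.smul_apply, smul_eq_mul]; ring
    rw [he, ha]
    exact Dvd.intro _ rfl
  · -- MMod (m+1) D' D
    intro i j
    have he : (D + a • Δ) i j - D i j = a * Δ i j := by
      simp only [Matrix.add_apply, Matrix.smul_apply, smul_eq_mul]; ring
    rw [he, ha]
    exact Dvd.intro _ rfl


/-- The invariant carried through the approximation process. -/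
def Good (x : Matrix (Fin n) (Fin n) (𝕎 k)) (m : ℕ)
    (PD : Matrix (Fin n) (Fin n) (𝕎 k) × Matrix (Fin n) (Fin n) (𝕎 k)) : Prop :=
  PD.2.IsDiag ∧ MMod 1 PD.1 1 ∧ MMod 1 PD.2 (Matrix.diagonal fun i => x i i) ∧
    MMod (m + 1) (PD.1 * x) (PD.2 * PD.1)

lemma mmod_symm {m : ℕ} {A B : Matrix (Fin n) (Fin n) (𝕎 k)}
    (h : MMod m A B) : MMod m B A := by
  intro i j
  rw [← neg_sub]
  exact dvd_neg.mpr (h i j)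

open scoped Classical in
noncomputable def seq (x : Matrix (Fin n) (Fin n) (𝕎 k))
    (hunit : ∀ i j, i ≠ j → IsUnit (x j j - x i i))
    (hx1 : MMod 1 x (Matrix.diagonal fun i => x i i)) :
    ℕ → Matrix (Fin n) (Fin n) (𝕎 k) × Matrix (Fin n) (Fin n) (𝕎 k)
  | 0 => (1, Matrix.diagonal fun i => x i i)
  | (m + 1) =>
    if h : Good x m (seq x hunit hx1 m) then
      (step_ex hunit hx1 h.1 h.2.1 h.2.2.1 h.2.2.2).choose
    else seq x hunit hx1 m

lemma seq_good (x : Matrix (Fin n) (Fin n) (𝕎 k))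
    (hunit : ∀ i j, i ≠ j → IsUnit (x j j - x i i))
    (hx1 : MMod 1 x (Matrix.diagonal fun i => x i i)) :
    ∀ m, Good x m (seq x hunit hx1 m) := by
  intro m
  induction m with
  | zero =>
    refine ⟨Matrix.isDiag_diagonal _, mmod_refl _ _, mmod_refl _ _, ?_⟩
    show MMod 1 (1 * x) ((Matrix.diagonal fun i => x i i) * 1)
    rw [one_mul, mul_one]
    exact hx1
  | succ m ih =>
    rw [seq, dif_pos ih]
    exact (step_ex hunit hx1 ih.1 ih.2.1 ih.2.2.1 ih.2.2.2).choose_spec.1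

lemma seq_diff (x : Matrix (Fin n) (Fin n) (𝕎 k))
    (hunit : ∀ i j, i ≠ j → IsUnit (x j j - x i i))
    (hx1 : MMod 1 x (Matrix.diagonal fun i => x i i)) (m : ℕ) :
    MMod (m + 1) (seq x hunit hx1 (m + 1)).1 (seq x hunit hx1 m).1 ∧
    MMod (m + 1) (seq x hunit hx1 (m + 1)).2 (seq x hunit hx1 m).2 := by
  have ih := seq_good x hunit hx1 m
  rw [seq, dif_pos ih]
  exact (step_ex hunit hx1 ih.1 ih.2.1 ih.2.2.1 ih.2.2.2).choose_spec.2

end RSLaux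

/-- Lemma lem:tori, formulated for the split reductive group GL_n,
whose Coxeter number is n, with T the diagonal torus. Let k be a finite field of
characteristic p > n (p greater than the Coxeter number) and let x ∈ GL_n(W(k)) be a
matrix whose reduction modulo p is a regular semisimple element of the diagonal torus
(i.e. diagonal with pairwise distinct diagonal entries). Then there is a split maximal
torus T' of GL_n over W(k) with T'_k = T_k containing x: concretely, x is conjugated
into the diagonal torus by a matrix P congruent to the identity modulo p. -/
theorem regular_semisimple_lift_lies_in_torus
    (p : ℕ) [Fact p.Prime] (n : ℕ)
    (k : Type) [Field k] [Finite k] [CharP k p] [PerfectRing k p]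
    (hcox : n < p)
    (x : Matrix (Fin n) (Fin n) (WittVector p k))
    (hx : IsUnit x.det)
    (hdiag : (x.map (Ideal.Quotient.mk (Ideal.span {(p : WittVector p k)}))).IsDiag)
    (hreg : ∀ i j : Fin n, i ≠ j →
      Ideal.Quotient.mk (Ideal.span {(p : WittVector p k)}) (x i i) ≠
      Ideal.Quotient.mk (Ideal.span {(p : WittVector p k)}) (x j j)) :
    ∃ P : Matrix (Fin n) (Fin n) (WittVector p k),
      IsUnit P.det ∧
      P.map (Ideal.Quotient.mk (Ideal.span {(p : WittVector p k)})) = 1 ∧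
      (P * x * P⁻¹).IsDiag := by
  classical
  open RSLaux in
  set π := Ideal.Quotient.mk (Ideal.span {(p : WittVector p k)}) with hπ
  have hpmem : ∀ a : WittVector p k, π a = 0 ↔ (p : WittVector p k) ∣ a := fun a => by
    rw [hπ, Ideal.Quotient.eq_zero_iff_mem, Ideal.mem_span_singleton]
  -- congruence of x with its diagonal
  have hx1 : MMod 1 x (Matrix.diagonal fun i => x i i) := by
    intro i j
    by_cases hij : i = j
    · subst hij; simp
    · rw [pow_one, Matrix.diagonal_apply_ne _ hij, sub_zero]
      exact (hpmem _).mp (by simpa [Matrix.map_apply] using hdiag hij)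
  -- the differences of diagonal entries are units
  have hunit : ∀ i j, i ≠ j → IsUnit (x j j - x i i) := by
    intro i j hij
    apply WittVector.isUnit_of_coeff_zero_ne_zero
    intro h0
    have hdvd : (p : WittVector p k) ∣ x j j - x i i := by
      have h1 := (pow_dvd_iff 1 (x j j - x i i)).mpr (by
        intro i' hi'
        interval_cases i'
        exact h0)
      rwa [pow_one] at h1
    have h2 := (hpmem _).mpr hdvd
    rw [RingHom.map_sub, sub_eq_zero] at h2
    exact hreg i j hij h2.symm
  set q := seq x hunit hx1 with hq
  have hGood := seq_good x hunit hx1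
  have hdiff := seq_diff x hunit hx1
  -- take limits entrywise
  have hPex : ∀ i j, ∃ L, ∀ m, (p : WittVector p k) ^ (m + 1) ∣ L - (q m).1 i j :=
    fun i j => limit (fun m => (q m).1 i j) (fun m => (hdiff m).1 i j)
  have hDex : ∀ i j, ∃ L, ∀ m, (p : WittVector p k) ^ (m + 1) ∣ L - (q m).2 i j :=
    fun i j => limit (fun m => (q m).2 i j) (fun m => (hdiff m).2 i j)
  choose PL hPL using hPex
  choose DL hDL using hDex
  set Plim : Matrix (Fin n) (Fin n) (WittVector p k) := Matrix.of PL with hPlim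
  set Dlim : Matrix (Fin n) (Fin n) (WittVector p k) := Matrix.of DL with hDlim
  have hPq : ∀ m, MMod (m + 1) Plim (q m).1 := fun m i j => hPL i j m
  have hDq : ∀ m, MMod (m + 1) Dlim (q m).2 := fun m i j => hDL i j m
  -- the limit satisfies Plim * x = Dlim * Plim
  have hPxD : Plim * x = Dlim * Plim := by
    refine Matrix.ext fun i j => ?_
    rw [← sub_eq_zero]
    apply eq_zero_of_forall_pow_dvd
    intro m
    refine (pow_dvd_pow _ (Nat.le_succ m)).trans ?_
    have h1 : MMod (m + 1) (Plim * x) ((q m).1 * x) := mmod_mul (hPq m) (mmod_refl _ x)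
    have h2 : MMod (m + 1) (Dlim * Plim) ((q m).2 * (q m).1) := mmod_mul (hDq m) (hPq m)
    have h3 := (hGood m).2.2.2
    have h4 : MMod (m + 1) (Plim * x) (Dlim * Plim) :=
      mmod_trans (mmod_trans h1 h3) (mmod_symm h2)
    exact h4 i j
  -- Dlim is diagonal
  have hDdiag : Dlim.IsDiag := by
    intro i j hij
    apply eq_zero_of_forall_pow_dvd
    intro m
    refine (pow_dvd_pow _ (Nat.le_succ m)).trans ?_
    have := hDq m i j
    rwa [(hGood m).1 hij, sub_zero] at this
  -- Plim reduces to the identity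
  have hP1 : MMod 1 Plim 1 := by
    have := hPq 0
    exact this
  have hmap : Plim.map π = 1 := by
    have h1 : (1 : Matrix (Fin n) (Fin n) (WittVector p k)).map π = 1 :=
      Matrix.map_one π (RingHom.map_zero π) (RingHom.map_one π)
    rw [← h1]
    refine Matrix.ext fun i j => ?_
    rw [Matrix.map_apply, Matrix.map_apply, hπ, Ideal.Quotient.eq]
    exact Ideal.mem_span_singleton.mpr (by
      have := hP1 i j; rwa [pow_one] at this)
  have hdet : IsUnit Plim.det := by
    apply WittVector.isUnit_of_coeff_zero_ne_zero
    have h1 : π Plim.det = 1 := by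
      have h2 := congrArg Matrix.det hmap
      rw [Matrix.det_one] at h2
      rw [RingHom.map_det]
      exact h2
    have h2 : (p : WittVector p k) ∣ Plim.det - 1 := by
      rw [← hpmem, RingHom.map_sub, h1, RingHom.map_one, sub_self]
    obtain ⟨c, hc⟩ := h2
    have h3 : Plim.det = 1 + (p : WittVector p k) * c := by linear_combination hc
    rw [h3]
    have h4 : ((1 : WittVector p k) + (p : WittVector p k) * c).coeff 0
        = 1 + ((p : WittVector p k) * c).coeff 0 := by
      rw [WittVector.add_coeff_zero, WittVector.one_coeff_zero]
    rw [h4, mul_comm, WittVector.mul_charP_coeff_zero, add_zero]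
    exact one_ne_zero
  refine ⟨Plim, hdet, hmap, ?_⟩
  have hfin : Plim * x * Plim⁻¹ = Dlim := by
    rw [hPxD, Matrix.mul_assoc, Matrix.mul_nonsing_inv _ hdet, Matrix.mul_one]
  rw [hfin]
  exact hDdiag
end
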